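/- For every complex number x with |x| < 1, (Σ_{n∈ℤ} x^{n²})² = (Σ_{n∈ℤ} x^{2n²})² + x·(Σ_{n∈ℤ} x^{4·n(n+1)/2})²; equivalently, the generating-function identity Σ_{n≥0} S₂(n)x^n = Σ_{n≥0} S₂(n)x^{2n} + Σ_{n≥0} T₂(n)x^{4n+1} holds, where S₂(n) = #{(x,y)∈ℤ² : x²+y²=n} and T₂(n) = #{(x,y)∈ℤ² : x(x+1)/2 + y(y+1)/2 = n}. -/

import Mathlib

open Function Set

set_option maxHeartbeats 4000000

private lemma aux_summable_norm {x : ℂ} (hx0 : x ≠ 0) (hx : ‖x‖ < 1) (g : ℤ → ℤ)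
    (hg : ∀ n : ℤ, |n| - 1 ≤ g n) : Summable fun n : ℤ => ‖x ^ (g n)‖ := by
  have h0 : (0:ℝ) < ‖x‖ := norm_pos_iff.mpr hx0
  have hgeo : Summable fun n : ℕ => ‖x‖ ^ n := summable_geometric_of_lt_one (norm_nonneg x) hx
  have hbase : Summable fun n : ℤ => ‖x‖ ^ (|n| - 1) := by
    have heq : ∀ n : ℤ, ‖x‖ ^ (|n| - 1) = ‖x‖⁻¹ * ‖x‖ ^ |n| := by
      intro n
      rw [zpow_sub₀ (ne_of_gt h0), zpow_one, div_eq_inv_mul]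
    simp_rw [heq]
    apply Summable.mul_left
    apply Summable.of_nat_of_neg
    · simpa using hgeo
    · simpa using hgeo
  apply Summable.of_nonneg_of_le (fun n => norm_nonneg _) _ hbase
  intro n
  rw [norm_zpow]
  exact zpow_le_zpow_right_of_le_one₀ h0 hx.le (hg n)

theorem stmt_11 (x : ℂ) (hx : ‖x‖ < 1) :
    (∑' n : ℤ, x ^ (n ^ 2)) ^ 2 =
      (∑' n : ℤ, x ^ (2 * n ^ 2)) ^ 2 + x * (∑' n : ℤ, x ^ (2 * n * (n + 1))) ^ 2 := by
  rcases eq_or_ne x 0 with rfl | hx0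
  · have e1 : (fun n : ℤ => (0:ℂ) ^ (n ^ 2)) = fun n : ℤ => if n = 0 then 1 else 0 := by
      ext n
      rcases eq_or_ne n 0 with rfl | hn
      · norm_num
      · rw [if_neg hn, zero_zpow _ (by positivity)]
    have e2 : (fun n : ℤ => (0:ℂ) ^ (2 * n ^ 2)) = fun n : ℤ => if n = 0 then 1 else 0 := by
      ext n
      rcases eq_or_ne n 0 with rfl | hn
      · norm_num
      · rw [if_neg hn, zero_zpow _ (by positivity)]
    rw [e1, e2, tsum_ite_eq]
    ring
  · -- summability of the three series in norm
    have s1 : Summable fun n : ℤ => ‖x ^ (n ^ 2)‖ := by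
      apply aux_summable_norm hx0 hx
      intro n; rcases abs_cases n with ⟨h, _⟩ | ⟨h, _⟩ <;> nlinarith
    have s2 : Summable fun n : ℤ => ‖x ^ (2 * n ^ 2)‖ := by
      apply aux_summable_norm hx0 hx
      intro n; rcases abs_cases n with ⟨h, _⟩ | ⟨h, _⟩ <;> nlinarith
    have s3 : Summable fun n : ℤ => ‖x ^ (2 * n * (n + 1))‖ := by
      apply aux_summable_norm hx0 hx
      intro n; rcases abs_cases n with ⟨h, h'⟩ | ⟨h, h'⟩ <;> nlinarith
    set F : ℤ × ℤ → ℂ := fun p => x ^ (p.1 ^ 2 + p.2 ^ 2) with hF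
    have hFeq : F = fun p : ℤ × ℤ => x ^ (p.1 ^ 2) * x ^ (p.2 ^ 2) := by
      funext p; exact zpow_add₀ hx0 _ _
    have hFsum : Summable F := by
      rw [hFeq]
      exact summable_mul_of_summable_norm (f := fun n : ℤ => x ^ (n ^ 2)) (g := fun n : ℤ => x ^ (n ^ 2)) s1 s1
    -- LHS = sum over pairs
    have step1 : (∑' n : ℤ, x ^ (n ^ 2)) ^ 2 = ∑' p : ℤ × ℤ, F p := by
      rw [sq, tsum_mul_tsum_of_summable_norm s1 s1, hFeq]
    set F₁ : ℤ × ℤ → ℂ := fun p => if Even (p.1 + p.2) then F p else 0 with hF₁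
    set F₂ : ℤ × ℤ → ℂ := fun p => if Even (p.1 + p.2) then 0 else F p with hF₂
    have hs1 : Summable F₁ := by
      apply Summable.of_norm_bounded hFsum.norm
      intro p; simp only [hF₁]; split <;> simp [norm_nonneg]
    have hs2 : Summable F₂ := by
      apply Summable.of_norm_bounded hFsum.norm
      intro p; simp only [hF₂]; split <;> simp [norm_nonneg]
    have hsplit : ∑' p : ℤ × ℤ, F p = (∑' p : ℤ × ℤ, F₁ p) + ∑' p : ℤ × ℤ, F₂ p := by
      rw [← Summable.tsum_add hs1 hs2]
      apply tsum_congr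
      intro p
      by_cases h : Even (p.1 + p.2) <;> simp [hF₁, hF₂, h]
    -- even part
    have heven : ∑' p : ℤ × ℤ, F₁ p = (∑' n : ℤ, x ^ (2 * n ^ 2)) ^ 2 := by
      have hinj : Injective (fun q : ℤ × ℤ => (q.1 + q.2, q.1 - q.2)) := by
        intro a b h
        simp only [Prod.mk.injEq, Prod.ext_iff] at h ⊢
        omega
      have hsupp : support F₁ ⊆ Set.range (fun q : ℤ × ℤ => (q.1 + q.2, q.1 - q.2)) := by
        intro p hp
        have hev : Even (p.1 + p.2) := by
          by_contra h
          simp [hF₁, h] at hp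
        obtain ⟨k, hk⟩ := hev
        exact ⟨(k, p.1 - k), by simp [Prod.ext_iff]; omega⟩
      have := hinj.tsum_eq hsupp
      rw [← this]
      have : ∀ q : ℤ × ℤ, F₁ (q.1 + q.2, q.1 - q.2) = x ^ (2 * q.1 ^ 2) * x ^ (2 * q.2 ^ 2) := by
        intro q
        have hev : Even ((q.1 + q.2) + (q.1 - q.2)) := ⟨q.1, by ring⟩
        simp only [hF₁, hF, if_pos hev]
        rw [← zpow_add₀ hx0]
        congr 1
        ring
      calc (∑' q : ℤ × ℤ, F₁ (q.1 + q.2, q.1 - q.2))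
          = ∑' q : ℤ × ℤ, x ^ (2 * q.1 ^ 2) * x ^ (2 * q.2 ^ 2) := tsum_congr this
        _ = (∑' n : ℤ, x ^ (2 * n ^ 2)) ^ 2 := by
            rw [sq, tsum_mul_tsum_of_summable_norm s2 s2]
    -- odd part
    have hodd : ∑' p : ℤ × ℤ, F₂ p = x * (∑' n : ℤ, x ^ (2 * n * (n + 1))) ^ 2 := by
      have hinj : Injective (fun q : ℤ × ℤ => (q.1 + q.2 + 1, q.1 - q.2)) := by
        intro a b h
        simp only [Prod.mk.injEq, Prod.ext_iff] at h ⊢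
        omega
      have hsupp : support F₂ ⊆ Set.range (fun q : ℤ × ℤ => (q.1 + q.2 + 1, q.1 - q.2)) := by
        intro p hp
        have hodd' : ¬ Even (p.1 + p.2) := by
          by_contra h
          simp [hF₂, h] at hp
        rw [Int.not_even_iff_odd] at hodd'
        obtain ⟨k, hk⟩ := hodd'
        exact ⟨(k, p.1 - 1 - k), by simp [Prod.ext_iff]; omega⟩
      have := hinj.tsum_eq hsupp
      rw [← this]
      have key : ∀ q : ℤ × ℤ, F₂ (q.1 + q.2 + 1, q.1 - q.2)
          = x * (x ^ (2 * q.1 * (q.1 + 1)) * x ^ (2 * q.2 * (q.2 + 1))) := by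
        intro q
        have hnev : ¬ Even ((q.1 + q.2 + 1) + (q.1 - q.2)) := by
          rw [Int.not_even_iff_odd]
          exact ⟨q.1, by ring⟩
        simp only [hF₂, hF, if_neg hnev]
        have he : (q.1 + q.2 + 1) ^ 2 + (q.1 - q.2) ^ 2
            = 1 + (2 * q.1 * (q.1 + 1) + 2 * q.2 * (q.2 + 1)) := by ring
        rw [he, zpow_add₀ hx0, zpow_add₀ hx0, zpow_one]
      calc (∑' q : ℤ × ℤ, F₂ (q.1 + q.2 + 1, q.1 - q.2))
          = ∑' q : ℤ × ℤ, x * (x ^ (2 * q.1 * (q.1 + 1)) * x ^ (2 * q.2 * (q.2 + 1))) :=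
            tsum_congr key
        _ = x * ∑' q : ℤ × ℤ, x ^ (2 * q.1 * (q.1 + 1)) * x ^ (2 * q.2 * (q.2 + 1)) :=
            tsum_mul_left
        _ = x * (∑' n : ℤ, x ^ (2 * n * (n + 1))) ^ 2 := by
            rw [sq, tsum_mul_tsum_of_summable_norm s3 s3]
    rw [step1, hsplit, heven, hodd]
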